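/- Let J be a self-adjoint (n−1)×(n−1) Jacobi matrix with entries c_k ∈ ℝ on the diagonal and b_k ∈ ℂ∖{0} on the superdiagonal (with conjugates on the subdiagonal), having simple eigenvalues μ_1,...,μ_{n−1} with orthonormal eigenvectors u_k = (u_{k,1},...,u_{k,n−1})^T. Then for complex numbers b_{n−1} (the given superdiagonal entry) and any b_n ∈ ℂ∖{0}, setting β = b_1 b_2 ⋯ b_n, one has b_n u_{k,1} · b_{n−1} · conj(u_{k,n−1}) = β / χ'(μ_k) for each k, where χ(λ) = det(λI − J). In particular u_{k,1} ≠ 0 and u_{k,n−1} ≠ 0 for all k. -/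

import Mathlib

open Polynomial Matrix Finset

noncomputable section

/-- Self-adjoint tridiagonal (Jacobi) matrix with real diagonal `c` and complex
superdiagonal `b` (conjugates on the subdiagonal). -/
def jacobiC (m : ℕ) (c : ℕ → ℝ) (b : ℕ → ℂ) : Matrix (Fin m) (Fin m) ℂ :=
  Matrix.of fun i j =>
    if (i : ℕ) = (j : ℕ) then ((c (i : ℕ) : ℝ) : ℂ)
    else if (i : ℕ) + 1 = (j : ℕ) then b (i : ℕ)
    else if (j : ℕ) + 1 = (i : ℕ) then (starRingEnd ℂ) (b (j : ℕ))
    else 0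

/-- with `J` the `(n−1)×(n−1)` (here size `m = n−1`) self-adjoint Jacobi
matrix with off-diagonal entries `b 0, …, b (m−2)`, further nonzero numbers
`b (m−1)` (= b_{n−1}) and `b m` (= b_n), `β = b_1⋯b_n`, simple eigenvalues `μ_k`,
and orthonormal eigenvectors `u_k`, one has
`b_n u_{k,1} b_{n−1} conj(u_{k,n−1}) = β / χ'(μ_k)`, and in particular
`u_{k,1} ≠ 0` and `u_{k,n−1} ≠ 0`. -/
private lemma deriv_eval_prod {ι : Type*} [DecidableEq ι] (s : Finset ι) (f : ι → ℂ) (x : ℂ) :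
    (Polynomial.derivative (∏ i ∈ s, (X - C (f i)))).eval x
      = ∑ i ∈ s, ∏ j ∈ s.erase i, (x - f j) := by
  induction s using Finset.induction_on with
  | empty => simp
  | insert a s ha ih =>
      rw [Finset.prod_insert ha, derivative_mul, derivative_X_sub_C, one_mul,
        Polynomial.eval_add, Polynomial.eval_mul, ih, Finset.sum_insert ha,
        Finset.erase_insert ha]
      simp only [Polynomial.eval_prod, Polynomial.eval_sub, Polynomial.eval_X,
        Polynomial.eval_C]
      rw [Finset.mul_sum]
      congr 1
      refine Finset.sum_congr rfl fun i hi => ?_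
      rw [Finset.erase_insert_of_ne (by rintro rfl; exact ha hi),
        Finset.prod_insert (fun h => ha (Finset.mem_of_mem_erase h))]

theorem stmt4 (m : ℕ) (hm : 2 ≤ m) (c : ℕ → ℝ) (b : ℕ → ℂ)
    (hb : ∀ k : ℕ, k < m + 1 → b k ≠ 0)
    (μ : Fin m → ℝ) (hμ : Function.Injective μ)
    (u : Fin m → (Fin m → ℂ))
    (heig : ∀ k, (jacobiC m c b).mulVec (u k) = ((μ k : ℂ)) • u k)
    (horth : ∀ j k, star (u j) ⬝ᵥ u k = if j = k then (1 : ℂ) else 0)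
    (hchar : (jacobiC m c b).charpoly = ∏ j, (X - C ((μ j : ℂ)))) :
    ∀ k : Fin m,
      b m * u k ⟨0, by omega⟩ * b (m - 1) * (starRingEnd ℂ) (u k ⟨m - 1, by omega⟩)
          = (∏ j ∈ Finset.range (m + 1), b j)
              / ((jacobiC m c b).charpoly.derivative.eval ((μ k : ℂ))) ∧
      u k ⟨0, by omega⟩ ≠ 0 ∧ u k ⟨m - 1, by omega⟩ ≠ 0 := by
  intro k
  obtain ⟨m', rfl⟩ : ∃ m', m = m' + 1 := ⟨m - 1, by omega⟩
  set J := jacobiC (m' + 1) c b with hJdef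
  set U : Matrix (Fin (m'+1)) (Fin (m'+1)) ℂ := Matrix.of fun i j => u j i with hUdef
  set x : ℂ := ((μ k : ℝ) : ℂ) with hxdef
  set D : Matrix (Fin (m'+1)) (Fin (m'+1)) ℂ := Matrix.diagonal (fun i => ((μ i : ℝ) : ℂ))
    with hDdef
  -- unitarity
  have hUU' : Uᴴ * U = 1 := by
    ext i j
    have h := horth i j
    simp only [dotProduct, Pi.star_apply] at h
    simp only [Matrix.mul_apply, Matrix.conjTranspose_apply, hUdef, Matrix.of_apply,
      Matrix.one_apply, h]
  have hU1 : U * Uᴴ = 1 := mul_eq_one_comm.mp hUU'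
  -- eigen decomposition
  have hJU : J * U = U * D := by
    ext i j
    have h := congrFun (heig j) i
    simp only [Matrix.mulVec, dotProduct, Pi.smul_apply, smul_eq_mul] at h
    calc (J * U) i j = ∑ x, J i x * u j x := by simp [Matrix.mul_apply, hUdef]
      _ = ((μ j : ℝ) : ℂ) * u j i := h
      _ = (U * D) i j := by
          rw [hDdef, Matrix.mul_diagonal]; exact (mul_comm _ _)
  set B : Matrix (Fin (m'+1)) (Fin (m'+1)) ℂ := x • (1 : Matrix _ _ ℂ) - J with hBdef
  have hB : B = U * (x • (1 : Matrix _ _ ℂ) - D) * Uᴴ := by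
    rw [Matrix.mul_sub, Matrix.mul_smul, Matrix.mul_one, Matrix.sub_mul, Matrix.smul_mul,
      hU1, ← hJU, Matrix.mul_assoc, hU1, Matrix.mul_one]
  have hBd : x • (1 : Matrix (Fin (m'+1)) (Fin (m'+1)) ℂ) - D
      = Matrix.diagonal (fun i => x - ((μ i : ℝ) : ℂ)) := by
    ext i j
    rcases eq_or_ne i j with rfl | h
    · simp [hDdef]
    · simp [hDdef, Matrix.sub_apply, Matrix.smul_apply, Matrix.one_apply_ne h,
        Matrix.diagonal_apply_ne _ h]
  -- adjugates of unitaries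
  have hadjU : Matrix.adjugate U = U.det • Uᴴ := by
    calc Matrix.adjugate U = 1 * Matrix.adjugate U := (one_mul _).symm
      _ = Uᴴ * (U * Matrix.adjugate U) := by rw [← Matrix.mul_assoc, hUU']
      _ = Uᴴ * (U.det • 1) := by rw [Matrix.mul_adjugate]
      _ = U.det • Uᴴ := by rw [Matrix.mul_smul, Matrix.mul_one]
  have hadjUH : Matrix.adjugate Uᴴ = Uᴴ.det • U := by
    calc Matrix.adjugate Uᴴ = 1 * Matrix.adjugate Uᴴ := (one_mul _).symm
      _ = U * (Uᴴ * Matrix.adjugate Uᴴ) := by rw [← Matrix.mul_assoc, hU1]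
      _ = U * (Uᴴ.det • 1) := by rw [Matrix.mul_adjugate]
      _ = Uᴴ.det • U := by rw [Matrix.mul_smul, Matrix.mul_one]
  have hdet1 : Uᴴ.det * U.det = 1 := by rw [← Matrix.det_mul, hUU', Matrix.det_one]
  set d : Fin (m'+1) → ℂ := fun i => ∏ j ∈ Finset.univ.erase i, (x - ((μ j : ℝ) : ℂ))
    with hddef
  have hadjB : Matrix.adjugate B = U * Matrix.diagonal d * Uᴴ := by
    rw [hB, hBd, Matrix.adjugate_mul_distrib, Matrix.adjugate_mul_distrib,
      Matrix.adjugate_diagonal, hadjU, hadjUH, Matrix.smul_mul, Matrix.mul_smul,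
      Matrix.mul_smul, smul_smul, hdet1, one_smul, ← Matrix.mul_assoc]
  have hdzero : ∀ i, i ≠ k → d i = 0 := by
    intro i hi
    exact Finset.prod_eq_zero (Finset.mem_erase.mpr ⟨Ne.symm hi, Finset.mem_univ k⟩)
      (by simp [hxdef])
  have hentry : Matrix.adjugate B 0 (Fin.last m')
      = u k 0 * (d k * (starRingEnd ℂ) (u k (Fin.last m'))) := by
    rw [hadjB, Matrix.mul_apply]
    rw [Finset.sum_eq_single k]
    · simp [Matrix.mul_diagonal, hUdef, Matrix.conjTranspose_apply, mul_assoc]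
    · intro i _ hi
      simp [Matrix.mul_diagonal, hdzero i hi]
    · simp
  -- determinant side
  have hb' : ∀ j < m', b j ≠ 0 := fun j hj => hb j (by omega)
  set M2 : Matrix (Fin (m'+1)) (Fin (m'+1)) ℂ :=
    B.updateRow (Fin.last m') (Pi.single 0 1) with hM2def
  have hminor : ∀ p q : Fin m', (M2.submatrix Fin.castSucc Fin.succ) p q
      = B p.castSucc q.succ := by
    intro p q
    simp only [Matrix.submatrix_apply, hM2def]
    rw [Matrix.updateRow_ne (Fin.castSucc_lt_last p).ne]
  have hBentry : ∀ p q : Fin m', B p.castSucc q.succ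
      = (if (p : ℕ) = (q : ℕ) + 1 then x else 0)
        - jacobiC (m'+1) c b p.castSucc q.succ := by
    intro p q
    simp only [hBdef, Matrix.sub_apply, Matrix.smul_apply, Matrix.one_apply, smul_eq_mul,
      hJdef]
    congr 1
    rcases eq_or_ne ((p : ℕ)) ((q : ℕ) + 1) with h | h
    · rw [if_pos (Fin.ext (by simpa using h)), if_pos h, mul_one]
    · rw [if_neg (fun hh => h (by simpa using congrArg Fin.val hh)), if_neg h, mul_zero]
  have htri : (M2.submatrix Fin.castSucc Fin.succ).BlockTriangular OrderDual.toDual := by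
    intro p q hpq
    have hpq' : (p : ℕ) < (q : ℕ) := hpq
    rw [hminor, hBentry]
    have h1 : ¬ ((p : ℕ) = (q : ℕ) + 1) := by omega
    rw [if_neg h1]
    simp only [jacobiC, Matrix.of_apply, Fin.coe_castSucc, Fin.val_succ]
    rw [if_neg (by omega), if_neg (by omega), if_neg (by omega)]
    simp
  have hdiagminor : ∀ p : Fin m', (M2.submatrix Fin.castSucc Fin.succ) p p = -(b (p : ℕ)) := by
    intro p
    rw [hminor, hBentry, if_neg (by omega)]
    simp only [jacobiC, Matrix.of_apply, Fin.coe_castSucc, Fin.val_succ]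
    rw [if_neg (by omega)]
    simp
  have hminordet : (M2.submatrix Fin.castSucc Fin.succ).det
      = (-1 : ℂ) ^ m' * ∏ j ∈ Finset.range m', b j := by
    rw [Matrix.det_of_lowerTriangular _ htri]
    calc (∏ p : Fin m', (M2.submatrix Fin.castSucc Fin.succ) p p)
        = ∏ p : Fin m', (-1 : ℂ) * b (p : ℕ) := by
          refine Finset.prod_congr rfl fun p _ => ?_
          rw [hdiagminor]; ring
      _ = (-1 : ℂ) ^ m' * ∏ p : Fin m', b (p : ℕ) := by
          rw [Finset.prod_mul_distrib, Finset.prod_const, Finset.card_univ, Fintype.card_fin]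
      _ = (-1 : ℂ) ^ m' * ∏ j ∈ Finset.range m', b j := by
          rw [Fin.prod_univ_eq_prod_range]
  have hdetside : Matrix.adjugate B 0 (Fin.last m') = ∏ j ∈ Finset.range m', b j := by
    rw [Matrix.adjugate_apply, ← hM2def, Matrix.det_succ_row M2 (Fin.last m')]
    rw [Finset.sum_eq_single 0]
    · rw [Fin.succAbove_last, Fin.succAbove_zero, hminordet]
      have hrow : M2 (Fin.last m') 0 = 1 := by
        rw [hM2def, Matrix.updateRow_self]; simp
      rw [hrow]
      simp only [Fin.val_last, Fin.val_zero, add_zero, mul_one]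
      rw [← mul_assoc, ← pow_add, ← two_mul, pow_mul]
      norm_num
    · intro j _ hj
      have hrow : M2 (Fin.last m') j = 0 := by
        rw [hM2def, Matrix.updateRow_self, Pi.single_eq_of_ne hj]
      rw [hrow, mul_zero, zero_mul]
    · simp
  -- derivative side
  have hchi : (jacobiC (m'+1) c b).charpoly.derivative.eval x = d k := by
    rw [hchar, deriv_eval_prod]
    rw [Finset.sum_eq_single k]
    · intro i _ hi
      exact Finset.prod_eq_zero (Finset.mem_erase.mpr ⟨Ne.symm hi, Finset.mem_univ k⟩)
        (by simp [hxdef])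
    · simp
  -- combine
  have hQ : (∏ j ∈ Finset.range m', b j) ≠ 0 :=
    Finset.prod_ne_zero_iff.mpr fun j hj => hb' j (Finset.mem_range.mp hj)
  have hkey : u k 0 * (d k * (starRingEnd ℂ) (u k (Fin.last m')))
      = ∏ j ∈ Finset.range m', b j := hentry.symm.trans hdetside
  have hu0 : u k 0 ≠ 0 := fun h => hQ (by rw [← hkey, h, zero_mul])
  have hdk : d k ≠ 0 := fun h => hQ (by rw [← hkey, h, zero_mul, mul_zero])
  have hul : u k (Fin.last m') ≠ 0 := by
    intro h
    apply hQ
    rw [← hkey, h]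
    simp
  refine ⟨?_, hu0, hul⟩
  show b (m' + 1) * u k 0 * b m' * (starRingEnd ℂ) (u k (Fin.last m'))
      = (∏ j ∈ Finset.range (m' + 1 + 1), b j)
          / ((jacobiC (m'+1) c b).charpoly.derivative.eval x)
  rw [hchi, Finset.prod_range_succ, Finset.prod_range_succ, eq_div_iff hdk]
  linear_combination (b (m' + 1) * b m') * hkey
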